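/- Let p and q be real polynomials with deg p = s and deg q = s−1, all zeros of p and q real and simple. If the real zeros of p strictly interlace the real zeros of q, then for every real λ the polynomial p + λq has only real and simple zeros. -/
import Mathlib
open Polynomial Finset Filter

lemma ivt_root (f : Polynomial ℝ) {a b : ℝ} (hab : a < b) (h : f.eval a * f.eval b < 0) :
    ∃ c ∈ Set.Ioo a b, f.eval c = 0 := by
  have hc : ContinuousOn (fun t => f.eval t) (Set.Icc a b) := f.continuousOn
  rcases lt_or_ge (f.eval a) 0 with ha | ha
  · have hb : 0 < f.eval b := by nlinarith
    obtain ⟨c, hc1, hc2⟩ := intermediate_value_Ioo hab.le hc ⟨ha, hb⟩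
    exact ⟨c, hc1, hc2⟩
  · have ha' : 0 < f.eval a := lt_of_le_of_ne ha (by intro he; rw [← he] at h; simp at h)
    have hb : f.eval b < 0 := by nlinarith
    obtain ⟨c, hc1, hc2⟩ := intermediate_value_Ioo' hab.le hc ⟨hb, ha'⟩
    exact ⟨c, hc1, hc2⟩

lemma ev_sign (f : Polynomial ℝ) (hf : f ≠ 0) :
    ∀ᶠ t in atTop, 0 < f.leadingCoeff * f.eval t := by
  have hlc : f.leadingCoeff ≠ 0 := leadingCoeff_ne_zero.mpr hf
  rcases Nat.eq_zero_or_pos f.natDegree with h0 | hpos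
  · obtain ⟨c, rfl⟩ := natDegree_eq_zero.mp h0
    refine Eventually.of_forall fun t => ?_
    simp only [leadingCoeff_C, eval_C]
    exact mul_self_pos.mpr (by simpa using hlc)
  · set g : Polynomial ℝ := C f.leadingCoeff * f with hg
    have hdeg : 0 < g.degree := by
      rw [hg, degree_C_mul (by simpa using hlc)]
      exact natDegree_pos_iff_degree_pos.mp hpos
    have hnng : 0 ≤ g.leadingCoeff := by
      rw [hg, leadingCoeff_mul, leadingCoeff_C]
      exact mul_self_nonneg _
    have := (g.tendsto_atTop_of_leadingCoeff_nonneg hdeg hnng).eventually_gt_atTop 0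
    filter_upwards [this] with t ht
    simpa [hg] using ht

/-- Obreshkov-type theorem, converse direction: if `p` has degree `s`, `q` has degree
`s-1`, all zeros of both are real and simple, and the zeros of `p` strictly interlace
the zeros of `q`, then for every real `λ` the polynomial `p + λ q` has only real and
simple zeros. -/
theorem stmt_0 (s : ℕ) (hs : 1 ≤ s) (p q : Polynomial ℝ)
    (hpdeg : p.natDegree = s) (hqdeg : q.natDegree = s - 1)
    (x y : ℕ → ℝ)
    (hx : StrictMonoOn x (Set.Iio s)) (hy : StrictMonoOn y (Set.Iio (s - 1)))
    (hpr : p.roots = (Multiset.range s).map x)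
    (hqr : q.roots = (Multiset.range (s - 1)).map y)
    (hint : ∀ i, i + 1 < s → x i < y i ∧ y i < x (i + 1)) :
    ∀ lam : ℝ, (p + Polynomial.C lam * q).roots.card = s ∧
      (p + Polynomial.C lam * q).roots.Nodup := by
  obtain ⟨n, rfl⟩ : ∃ n, s = n + 1 := ⟨s - 1, by omega⟩
  simp only [Nat.add_sub_cancel] at hqdeg hy hqr
  intro lam
  set r := p + Polynomial.C lam * q with hr
  have hp0 : p ≠ 0 := fun h => by simp [h] at hpdeg
  have hlc : p.leadingCoeff ≠ 0 := leadingCoeff_ne_zero.mpr hp0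
  have hcard : p.roots.card = p.natDegree := by rw [hpr, hpdeg]; simp
  -- eval formula
  have heval : ∀ t, p.eval t = p.leadingCoeff * ∏ j ∈ Finset.range (n+1), (t - x j) := by
    intro t
    conv_lhs => rw [← C_leadingCoeff_mul_prod_multiset_X_sub_C hcard]
    rw [eval_mul, eval_C, hpr, Multiset.map_map, eval_multiset_prod, Multiset.map_map]
    congr 1
    rw [Finset.prod_eq_multiset_prod, Finset.range_val]
    simp [Function.comp]
  -- sign of p at zeros of q
  have hkey : ∀ i, i < n → 0 < (-1:ℝ)^(n-i) * p.leadingCoeff * p.eval (y i) := by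
    intro i hi
    obtain ⟨hxy, hyx⟩ := hint i (by omega)
    have hA : 0 < ∏ j ∈ Finset.range (i+1), (y i - x j) := by
      apply Finset.prod_pos
      intro j hj
      simp only [Finset.mem_range] at hj
      have hxji : x j ≤ x i := by
        rcases eq_or_lt_of_le (Nat.lt_succ_iff.mp hj) with h | h
        · rw [h]
        · exact le_of_lt (hx (Set.mem_Iio.mpr (by omega)) (Set.mem_Iio.mpr (by omega)) h)
      linarith
    have hC : 0 < ∏ j ∈ Finset.Ico (i+1) (n+1), (x j - y i) := by
      apply Finset.prod_pos
      intro j hj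
      simp only [Finset.mem_Ico] at hj
      have : x (i+1) ≤ x j := by
        rcases eq_or_lt_of_le hj.1 with h | h
        · rw [h]
        · exact le_of_lt (hx (Set.mem_Iio.mpr (by omega)) (Set.mem_Iio.mpr (by omega)) h)
      linarith
    have hB : ∏ j ∈ Finset.Ico (i+1) (n+1), (y i - x j)
        = (-1:ℝ)^(n-i) * ∏ j ∈ Finset.Ico (i+1) (n+1), (x j - y i) := by
      have hc : ∀ j ∈ Finset.Ico (i+1) (n+1), (y i - x j) = (-1) * (x j - y i) :=
        fun j _ => by ring
      rw [Finset.prod_congr rfl hc, Finset.prod_mul_distrib, Finset.prod_const]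
      congr 2
      rw [Nat.card_Ico]
      omega
    rw [heval, ← Finset.prod_range_mul_prod_Ico _ (show i+1 ≤ n+1 by omega), hB]
    have hsq : (-1:ℝ)^(n-i) * (-1:ℝ)^(n-i) = 1 := by
      rw [← pow_add]; exact Even.neg_one_pow ⟨n-i, rfl⟩
    have hgoal : (-1:ℝ)^(n-i) * p.leadingCoeff *
        (p.leadingCoeff * ((∏ j ∈ Finset.range (i+1), (y i - x j)) *
          ((-1:ℝ)^(n-i) * ∏ j ∈ Finset.Ico (i+1) (n+1), (x j - y i))))
        = ((-1:ℝ)^(n-i) * (-1:ℝ)^(n-i)) * ((p.leadingCoeff * p.leadingCoeff) *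
          ((∏ j ∈ Finset.range (i+1), (y i - x j)) *
           (∏ j ∈ Finset.Ico (i+1) (n+1), (x j - y i)))) := by ring
    rw [hgoal, hsq, one_mul]
    exact mul_pos (mul_self_pos.mpr hlc) (mul_pos hA hC)
  -- degree and leading coefficient of r
  have hrcoeff : r.coeff (n+1) = p.leadingCoeff := by
    simp only [hr, coeff_add, coeff_C_mul]
    rw [coeff_eq_zero_of_natDegree_lt (by omega : q.natDegree < n+1)]
    rw [← hpdeg, coeff_natDegree]
    ring
  have hrdeg : r.natDegree = n + 1 := by
    apply natDegree_eq_of_le_of_coeff_ne_zero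
    · refine le_trans (natDegree_add_le _ _) ?_
      exact max_le (le_of_eq hpdeg) (le_trans (natDegree_C_mul_le _ _) (by omega))
    · rw [hrcoeff]; exact hlc
  have hrlc : r.leadingCoeff = p.leadingCoeff := by rw [leadingCoeff, hrdeg, hrcoeff]
  have hr0 : r ≠ 0 := fun h => by simp [h] at hrdeg
  -- r agrees with p at zeros of q
  have hry : ∀ i, i < n → r.eval (y i) = p.eval (y i) := by
    intro i hi
    have hyq : q.eval (y i) = 0 := by
      have hm : y i ∈ q.roots := by
        rw [hqr]; exact Multiset.mem_map.mpr ⟨i, Multiset.mem_range.mpr hi, rfl⟩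
      exact (mem_roots'.mp hm).2
    simp [hr, hyq]
  -- behaviour at infinity
  have htop := ev_sign r hr0
  have hbot : ∀ᶠ t in atTop, 0 < (-1:ℝ)^(n+1) * p.leadingCoeff * r.eval (-t) := by
    have hXdeg : (-X : Polynomial ℝ).natDegree ≠ 0 := by simp
    have hcne : (r.comp (-X)) ≠ 0 := by
      intro h
      have h2 := natDegree_comp (p := r) (q := (-X : Polynomial ℝ))
      rw [h, hrdeg] at h2
      simp at h2
    filter_upwards [ev_sign _ hcne] with t ht
    rw [leadingCoeff_comp hXdeg] at ht
    simp only [eval_comp, eval_neg, eval_X, leadingCoeff_neg, leadingCoeff_X, hrlc,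
      hrdeg, natDegree_comp] at ht
    calc (0:ℝ) < p.leadingCoeff * (-1)^(n+1) * r.eval (-t) := by
          rw [mul_assoc]; simpa [natDegree_neg, mul_assoc] using ht
      _ = (-1)^(n+1) * p.leadingCoeff * r.eval (-t) := by ring
  -- choose a big M
  obtain ⟨M, hM1, hM2, hM3⟩ : ∃ M, (0 < p.leadingCoeff * r.eval M) ∧
      (0 < (-1:ℝ)^(n+1) * p.leadingCoeff * r.eval (-M)) ∧
      (1 + ∑ i ∈ Finset.range n, |y i|) < M := by
    obtain ⟨M, ⟨⟨h1, h2⟩, h3⟩⟩ :=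
      ((htop.and hbot).and (eventually_gt_atTop (1 + ∑ i ∈ Finset.range n, |y i|))).exists
    exact ⟨M, by rwa [hrlc] at h1, h2, h3⟩
  have hM0 : 0 < M := by
    have h1 : (0:ℝ) ≤ ∑ i ∈ Finset.range n, |y i| :=
      Finset.sum_nonneg fun i _ => abs_nonneg _
    linarith
  have hyM : ∀ i, i < n → -M < y i ∧ y i < M := by
    intro i hi
    have h1 : |y i| ≤ ∑ j ∈ Finset.range n, |y j| :=
      Finset.single_le_sum (f := fun j => |y j|) (fun j _ => abs_nonneg _)
        (Finset.mem_range.mpr hi)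
    have h2 : |y i| < M := by linarith
    exact abs_lt.mp h2
  -- checkpoints
  set tt : ℕ → ℝ := fun k => if k = 0 then -M else if k ≤ n then y (k-1) else M with htt
  have hadj : ∀ k, k ≤ n → tt k < tt (k+1) := by
    intro k hk
    by_cases hk0 : k = 0
    · subst hk0
      have h0 : tt 0 = -M := by simp [htt]
      by_cases hn : n = 0
      · have h1 : tt 1 = M := by simp [htt, hn]
        rw [h0, h1]; linarith
      · have h1 : tt 1 = y 0 := by
          simp only [htt]
          norm_num [Nat.one_le_iff_ne_zero.mpr hn]
        rw [h0, h1]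
        exact (hyM 0 (by omega)).1
    · have hk1 : tt k = y (k-1) := by simp [htt, hk0, hk]
      by_cases hkn : k + 1 ≤ n
      · have h2 : tt (k+1) = y k := by
          simp only [htt]
          norm_num [hkn]
        rw [hk1, h2]
        exact hy (Set.mem_Iio.mpr (by omega)) (Set.mem_Iio.mpr (by omega)) (by omega)
      · have h2 : tt (k+1) = M := by
          simp only [htt]
          norm_num [hkn]
        rw [hk1, h2]
        exact (hyM (k-1) (by omega)).2
  have hsign : ∀ k, k ≤ n+1 → 0 < (-1:ℝ)^(n+1-k) * p.leadingCoeff * r.eval (tt k) := by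
    intro k hk
    by_cases hk0 : k = 0
    · subst hk0
      have h0 : tt 0 = -M := by simp [htt]
      rw [h0]
      simpa using hM2
    · by_cases hkn : k ≤ n
      · have htk : tt k = y (k-1) := by simp [htt, hk0, hkn]
        rw [htk, hry (k-1) (by omega)]
        have he : n + 1 - k = n - (k-1) := by omega
        rw [he]
        exact hkey (k-1) (by omega)
      · have hk' : k = n+1 := by omega
        subst hk'
        have htk : tt (n+1) = M := by
          simp only [htt]
          norm_num
        rw [htk]
        simpa using hM1
  have hroot : ∀ k, k ≤ n → ∃ c, c ∈ Set.Ioo (tt k) (tt (k+1)) ∧ r.eval c = 0 := by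
    intro k hk
    have h1 := hsign k (by omega)
    have h2 := hsign (k+1) (by omega)
    rw [show n + 1 - k = (n - k) + 1 from by omega] at h1
    rw [show n + 1 - (k+1) = n - k from by omega] at h2
    have hprod : r.eval (tt k) * r.eval (tt (k+1)) < 0 := by
      have hsq : (-1:ℝ)^(n-k) * (-1:ℝ)^(n-k) = 1 := by
        rw [← pow_add]; exact Even.neg_one_pow ⟨n-k, rfl⟩
      rw [pow_succ] at h1
      have h3 := mul_pos h1 h2
      have hexp : ((-1:ℝ)^(n-k) * (-1) * p.leadingCoeff * r.eval (tt k)) *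
          ((-1:ℝ)^(n-k) * p.leadingCoeff * r.eval (tt (k+1)))
          = -(((-1:ℝ)^(n-k) * (-1:ℝ)^(n-k)) * ((p.leadingCoeff * p.leadingCoeff) *
            (r.eval (tt k) * r.eval (tt (k+1))))) := by ring
      rw [hexp, hsq, one_mul] at h3
      have h4 : (p.leadingCoeff * p.leadingCoeff) * (r.eval (tt k) * r.eval (tt (k+1))) < 0 := by
        linarith
      by_contra h5
      push_neg at h5
      exact absurd h4 (not_lt.mpr (mul_nonneg (mul_self_nonneg _) h5))
    obtain ⟨c, hc1, hc2⟩ := ivt_root r (hadj k hk) hprod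
    exact ⟨c, hc1, hc2⟩
  have hroot' : ∀ k, ∃ c, k ≤ n → c ∈ Set.Ioo (tt k) (tt (k+1)) ∧ r.eval c = 0 := by
    intro k
    by_cases hk : k ≤ n
    · obtain ⟨c, h⟩ := hroot k hk
      exact ⟨c, fun _ => h⟩
    · exact ⟨0, fun h => absurd h hk⟩
  choose z hz using hroot'
  have hmono : ∀ m, m ≤ n → ∀ k, k < m → z k < z m := by
    intro m
    induction m with
    | zero => intro _ k hk; omega
    | succ m ih =>
      intro hm k hk
      have hm' : m ≤ n := by omega
      have hlast : tt (m+1) < z (m+1) := ((hz (m+1) hm).1).1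
      rcases Nat.lt_succ_iff_lt_or_eq.mp hk with h | h
      · exact lt_trans (ih hm' k h) (lt_trans ((hz m hm').1).2 hlast)
      · subst h
        exact lt_trans ((hz k hm').1).2 hlast
  have hzroots : ∀ k, k ≤ n → z k ∈ r.roots := fun k hk =>
    mem_roots'.mpr ⟨hr0, (hz k hk).2⟩
  have hFsub : (Finset.range (n+1)).image z ⊆ r.roots.toFinset := by
    intro a ha
    simp only [Finset.mem_image, Finset.mem_range] at ha
    obtain ⟨k, hk, rfl⟩ := ha
    exact Multiset.mem_toFinset.mpr (hzroots k (by omega))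
  have hFcard : ((Finset.range (n+1)).image z).card = n+1 := by
    rw [Finset.card_image_of_injOn, Finset.card_range]
    intro a ha b hb hab
    simp only [Finset.coe_range, Set.mem_Iio] at ha hb
    by_contra hne
    rcases lt_or_gt_of_ne hne with h | h
    · exact absurd hab (ne_of_lt (hmono b (by omega) a h))
    · exact absurd hab.symm (ne_of_lt (hmono a (by omega) b h))
  have hle1 : n+1 ≤ r.roots.toFinset.card := hFcard ▸ Finset.card_le_card hFsub
  have hle2 : r.roots.toFinset.card ≤ Multiset.card r.roots := r.roots.toFinset_card_le
  have hle3 : Multiset.card r.roots ≤ n+1 := hrdeg ▸ r.card_roots'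
  refine ⟨by omega, ?_⟩
  rw [← Multiset.toFinset_card_eq_card_iff_nodup]
  omega
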